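/- In a budget-aggregation game where each agent i has utility u_i(delta) = sum over x in A_i of g_i(delta_x) for a continuous strictly convex strictly increasing g_i : [0,1] -> R, a strategy profile (delta_i*) is a Nash equilibrium if and only if every agent's support is a singleton equal to M_{delta*,i} and |M_{delta*,i}| = 1, where M_{delta,i} = argmax_{x in A_i} delta_x. -/

import Mathlib

def IsStrategy (n m : ℕ) (d : Fin m → ℝ) : Prop :=
  (∀ x, 0 ≤ d x) ∧ ∑ x, d x = 1 / n

def IsNash (n m : ℕ) (u : Fin n → (Fin m → ℝ) → ℝ) (δ : Fin n → Fin m → ℝ) : Prop :=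
  (∀ i, IsStrategy n m (δ i)) ∧
  ∀ i, ∀ d, IsStrategy n m d →
    u i ((∑ j, δ j) - δ i + d) ≤ u i (∑ j, δ j)

/-- Support of an individual distribution. -/
noncomputable def suppF {m : ℕ} (d : Fin m → ℝ) : Finset (Fin m) :=
  Finset.univ.filter (fun x => 0 < d x)

/-- `M δ i`: approved alternatives of `i` receiving maximal aggregate share. -/
noncomputable def Mset {m : ℕ} (A : Finset (Fin m)) (d : Fin m → ℝ) : Finset (Fin m) :=
  A.filter (fun x => ∀ y ∈ A, d y ≤ d x)


/-- Slope comparison for convex functions. -/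
lemma aux_slope_le {g : ℝ → ℝ} (hg : ConvexOn ℝ (Set.Icc (0:ℝ) 1) g)
    {a B t h : ℝ} (ha : 0 ≤ a) (haB : a ≤ B) (ht : 0 < t) (hh : 0 < h)
    (hth : a + t ≤ B + h) (h1 : B + h ≤ 1) :
    (g (a + t) - g a) / t ≤ (g (B + h) - g B) / h := by
  have hB0 : (0:ℝ) ≤ B := le_trans ha haB
  have haI : a ∈ Set.Icc (0:ℝ) 1 := ⟨ha, by linarith⟩
  have hatI : a + t ∈ Set.Icc (0:ℝ) 1 := ⟨by linarith, by linarith⟩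
  have hBI : B ∈ Set.Icc (0:ℝ) 1 := ⟨hB0, by linarith⟩
  have hBhI : B + h ∈ Set.Icc (0:ℝ) 1 := ⟨by linarith, h1⟩
  have h2 : (g (a + t) - g a) / t ≤ (g (B + h) - g a) / (B + h - a) := by
    have := hg.secant_mono haI hatI hBhI (by intro hc; linarith)
      (by intro hc; linarith) (by linarith)
    have e1 : a + t - a = t := by ring
    rwa [e1] at this
  have h3 : (g (B + h) - g a) / (B + h - a) ≤ (g (B + h) - g B) / h := by
    have := hg.secant_mono hBhI haI hBI (by intro hc; linarith)
      (by intro hc; linarith) haB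
    have e1 : (g a - g (B + h)) / (a - (B + h)) = (g (B + h) - g a) / (B + h - a) := by
      rw [← neg_div_neg_eq]; ring_nf
    have e2 : (g B - g (B + h)) / (B - (B + h)) = (g (B + h) - g B) / h := by
      rw [← neg_div_neg_eq]; ring_nf
    rwa [e1, e2] at this
  exact le_trans h2 h3

/-- Strict increment monotonicity for strictly convex functions. -/
lemma aux_incr_lt {g : ℝ → ℝ} (hg : StrictConvexOn ℝ (Set.Icc (0:ℝ) 1) g)
    {a b h : ℝ} (ha : 0 ≤ a) (hab : a < b) (hh : 0 < h) (hb1 : b + h ≤ 1) :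
    g (a + h) + g b < g a + g (b + h) := by
  have hD0 : (0:ℝ) < b + h - a := by linarith
  have hDne : b + h - a ≠ 0 := ne_of_gt hD0
  have hl : (0:ℝ) < (b - a) / (b + h - a) := div_pos (by linarith) hD0
  have hm : (0:ℝ) < h / (b + h - a) := div_pos hh hD0
  have hsum : h / (b + h - a) + (b - a) / (b + h - a) = 1 := by
    rw [← add_div, div_eq_one_iff_eq hDne]; ring
  have hsum' : (b - a) / (b + h - a) + h / (b + h - a) = 1 := by linarith
  have haI : a ∈ Set.Icc (0:ℝ) 1 := ⟨ha, by linarith⟩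
  have hbhI : b + h ∈ Set.Icc (0:ℝ) 1 := ⟨by linarith, hb1⟩
  have hne : a ≠ b + h := by intro hc; linarith
  have h1 := hg.2 haI hbhI hne hm hl hsum
  have h2 := hg.2 haI hbhI hne hl hm hsum'
  have e1 : (h / (b + h - a)) • a + ((b - a) / (b + h - a)) • (b + h) = b := by
    simp only [smul_eq_mul]; field_simp; ring
  have e2 : ((b - a) / (b + h - a)) • a + (h / (b + h - a)) • (b + h) = a + h := by
    simp only [smul_eq_mul]; field_simp; ring
  rw [e1] at h1; rw [e2] at h2
  simp only [smul_eq_mul] at h1 h2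
  have key : h / (b + h - a) * g a + (b - a) / (b + h - a) * g (b + h)
      + ((b - a) / (b + h - a) * g a + h / (b + h - a) * g (b + h))
      = g a + g (b + h) := by
    field_simp; ring
  linarith [h1, h2, key]

/-- An interior split is strictly dominated by one of the extreme splits. -/
lemma aux_split_lt {g : ℝ → ℝ} (hg : StrictConvexOn ℝ (Set.Icc (0:ℝ) 1) g)
    {p q s t : ℝ} (hp : 0 ≤ p) (hq : 0 ≤ q) (hs : 0 < s) (ht : 0 < t)
    (hp1 : p + s + t ≤ 1) (hq1 : q + s + t ≤ 1) :
    g (p + s) + g (q + t) < max (g p + g (q + s + t)) (g (p + s + t) + g q) := by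
  have hst : (0:ℝ) < s + t := by linarith
  have hstne : s + t ≠ 0 := ne_of_gt hst
  have hL0 : (0:ℝ) < t / (s + t) := div_pos ht hst
  have hM0 : (0:ℝ) < 1 - t / (s + t) := by
    have : t / (s + t) < 1 := by rw [div_lt_one hst]; linarith
    linarith
  have hsum : t / (s + t) + (1 - t / (s + t)) = 1 := by ring
  have hpI : p ∈ Set.Icc (0:ℝ) 1 := ⟨hp, by linarith⟩
  have hpstI : p + s + t ∈ Set.Icc (0:ℝ) 1 := ⟨by linarith, hp1⟩
  have hqI : q ∈ Set.Icc (0:ℝ) 1 := ⟨hq, by linarith⟩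
  have hqstI : q + s + t ∈ Set.Icc (0:ℝ) 1 := ⟨by linarith, hq1⟩
  have h1 := hg.2 hpI hpstI (by intro hc; linarith) hL0 hM0 hsum
  have h2 := hg.2 hqstI hqI (by intro hc; linarith) hL0 hM0 hsum
  have e1 : (t / (s + t)) • p + (1 - t / (s + t)) • (p + s + t) = p + s := by
    simp only [smul_eq_mul]; field_simp; ring
  have e2 : (t / (s + t)) • (q + s + t) + (1 - t / (s + t)) • q = q + t := by
    simp only [smul_eq_mul]; field_simp; ring
  rw [e1] at h1; rw [e2] at h2
  simp only [smul_eq_mul] at h1 h2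
  rcases le_total (g p + g (q + s + t)) (g (p + s + t) + g q) with hc | hc
  · rw [max_eq_right hc]; nlinarith
  · rw [max_eq_left hc]; nlinarith

section helpers

variable {n m : ℕ}

lemma aux_sum_split2 (s : Finset (Fin m)) (f : Fin m → ℝ) {x y : Fin m}
    (hx : x ∈ s) (hy : y ∈ s) (hxy : x ≠ y) :
    ∑ z ∈ s, f z = f x + (f y + ∑ z ∈ (s.erase x).erase y, f z) := by
  rw [← Finset.add_sum_erase s f hx, ← Finset.add_sum_erase (s.erase x) f
    (Finset.mem_erase.mpr ⟨hxy.symm, hy⟩)]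

lemma aux_update2_strategy {f : Fin m → ℝ} (hf : IsStrategy n m f) {x y : Fin m}
    (hxy : x ≠ y) {v w : ℝ} (hv : 0 ≤ v) (hw : 0 ≤ w) (hvw : v + w = f x + f y) :
    IsStrategy n m (Function.update (Function.update f x v) y w) := by
  constructor
  · intro z
    rcases eq_or_ne z y with rfl | hzy
    · simpa using hw
    rcases eq_or_ne z x with rfl | hzx
    · simp [Function.update_apply, hzy, hv]
    · simp [Function.update_apply, hzy, hzx]; exact hf.1 z
  · have h1 : ∑ z, Function.update (Function.update f x v) y w z
        = w + ∑ z ∈ Finset.univ \ {y}, Function.update f x v z :=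
      Finset.sum_update_of_mem (Finset.mem_univ y) (Function.update f x v) w
    have h2 : ∑ z ∈ Finset.univ \ {y}, Function.update f x v z
        = v + ∑ z ∈ (Finset.univ \ {y}) \ {x}, f z :=
      Finset.sum_update_of_mem (by simp [hxy]) f v
    have h3 : ∑ z ∈ Finset.univ \ {y}, f z
        = f x + ∑ z ∈ (Finset.univ \ {y}) \ {x}, f z := by
      have := Finset.add_sum_erase ((Finset.univ : Finset (Fin m)) \ {y}) f
        (show x ∈ Finset.univ \ {y} by simp [hxy])
      rw [Finset.erase_eq] at this
      linarith [this]
    have h4 : ∑ z, f z = f y + ∑ z ∈ Finset.univ \ {y}, f z := by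
      have := Finset.add_sum_erase (Finset.univ : Finset (Fin m)) f (Finset.mem_univ y)
      rw [Finset.erase_eq] at this
      linarith [this]
    have h5 := hf.2
    rw [h1, h2]
    rw [h4, h3] at h5
    linarith

lemma aux_point_strategy (hn : 0 < n) (y : Fin m) :
    IsStrategy n m (fun z => if z = y then 1 / (n:ℝ) else 0) := by
  have hpos : (0:ℝ) ≤ 1 / n := by positivity
  constructor
  · intro x
    dsimp only
    split <;> simp [hpos]
  · simp

/-- A strategy with singleton support is the point mass. -/
lemma aux_conc {f : Fin m → ℝ} (hf : IsStrategy n m f) {c : Fin m}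
    (hsupp : suppF f = {c}) : f c = 1 / n ∧ ∀ x, x ≠ c → f x = 0 := by
  have hzero : ∀ x, x ≠ c → f x = 0 := by
    intro x hx
    by_contra hne
    have hpos : 0 < f x := lt_of_le_of_ne (hf.1 x) (Ne.symm hne)
    have : x ∈ suppF f := by simp [suppF, hpos]
    rw [hsupp, Finset.mem_singleton] at this
    exact hx this
  refine ⟨?_, hzero⟩
  have := hf.2
  rwa [Finset.sum_eq_single c (fun b _ hb => hzero b hb) (by simp)] at this

end helpers

section mainproof

variable {n m : ℕ}

lemma aux_facts (hn : 0 < n) {δ : Fin n → Fin m → ℝ}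
    (hstrat : ∀ i, IsStrategy n m (δ i)) :
    (∀ x, 0 ≤ ∑ j, δ j x) ∧ (∑ x, ∑ j, δ j x = 1) ∧
    (∀ x, (∑ j, δ j x) ≤ 1) ∧
    (∀ x y, x ≠ y → (∑ j, δ j x) + (∑ j, δ j y) ≤ 1) ∧
    (∀ i x, δ i x ≤ ∑ j, δ j x) := by
  have hnR : (0:ℝ) < n := by exact_mod_cast hn
  have h0 : ∀ x, 0 ≤ ∑ j, δ j x := fun x => Finset.sum_nonneg fun j _ => (hstrat j).1 x
  have hsum : ∑ x, ∑ j, δ j x = 1 := by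
    rw [Finset.sum_comm, Finset.sum_congr rfl (fun j _ => (hstrat j).2)]
    rw [Finset.sum_const, Finset.card_univ, Fintype.card_fin, nsmul_eq_mul]
    field_simp
  refine ⟨h0, hsum, ?_, ?_, ?_⟩
  · intro x
    have := Finset.single_le_sum (f := fun x => ∑ j, δ j x)
      (fun x _ => h0 x) (Finset.mem_univ x)
    linarith [hsum]
  · intro x y hxy
    have h1 : ∑ z ∈ ({x, y} : Finset (Fin m)), (∑ j, δ j z) ≤ ∑ z, ∑ j, δ j z :=
      Finset.sum_le_sum_of_subset_of_nonneg (Finset.subset_univ _) (fun z _ _ => h0 z)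
    rw [Finset.sum_pair hxy] at h1
    linarith [hsum]
  · intro i x
    exact Finset.single_le_sum (fun j _ => (hstrat j).1 x) (Finset.mem_univ i)

end mainproof

/-- with binary symmetric separable strictly convex utilities
`u i δ = ∑_{x ∈ A i} g i (δ x)`, a profile is a Nash equilibrium iff each
agent's support equals `M_{δ*,i}` and this set is a singleton. -/
theorem convex_case_nash_characterization
    (n m : ℕ) (hn : 0 < n)
    (A : Fin n → Finset (Fin m)) (hA : ∀ i, (A i).Nonempty)
    (g : Fin n → ℝ → ℝ)
    (hcont : ∀ i, Continuous (g i))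
    (hconv : ∀ i, StrictConvexOn ℝ (Set.Icc (0 : ℝ) 1) (g i))
    (hmono : ∀ i, StrictMonoOn (g i) (Set.Icc (0 : ℝ) 1))
    (δ : Fin n → Fin m → ℝ) :
    IsNash n m (fun i d => ∑ x ∈ A i, g i (d x)) δ ↔
      (∀ i, IsStrategy n m (δ i)) ∧
      (∀ i, suppF (δ i) = Mset (A i) (∑ j, δ j) ∧
            (Mset (A i) (∑ j, δ j)).card = 1) := by
  have hnR : (0:ℝ) < n := by exact_mod_cast hn
  have hninv : (0:ℝ) < 1 / n := by positivity
  have hap : ∀ x : Fin m, (∑ j, δ j) x = ∑ j, δ j x := fun x => Finset.sum_apply x _ _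
  constructor
  · -- Nash → characterization
    rintro ⟨hstrat, hNash⟩
    obtain ⟨hΔ0, hΔsum, hΔ1, hpair, hδle⟩ := aux_facts hn hstrat
    refine ⟨hstrat, fun i => ?_⟩
    have hNr : ∀ d, IsStrategy n m d →
        ∑ x ∈ A i, g i ((∑ j, δ j x) - δ i x + d x) ≤ ∑ x ∈ A i, g i (∑ j, δ j x) := by
      intro d hd
      have := hNash i d hd
      simpa only [Pi.add_apply, Pi.sub_apply, Finset.sum_apply] using this
    -- Step A: support inside A i
    have hsub : ∀ x, 0 < δ i x → x ∈ A i := by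
      intro x hx
      by_contra hxA
      obtain ⟨y, hy⟩ := hA i
      have hxy : x ≠ y := fun h => hxA (h ▸ hy)
      set d := Function.update (Function.update (δ i) x 0) y (δ i y + δ i x) with hddef
      have hdstrat : IsStrategy n m d :=
        aux_update2_strategy (hstrat i) hxy le_rfl
          (add_nonneg ((hstrat i).1 y) ((hstrat i).1 x)) (by ring)
      have hq := hNr d hdstrat
      have hnew : ∑ z ∈ A i, g i ((∑ j, δ j z) - δ i z + d z)
          = g i ((∑ j, δ j y) + δ i x) + ∑ z ∈ (A i).erase y, g i (∑ j, δ j z) := by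
        rw [← Finset.add_sum_erase (A i) _ hy]
        have t1 : g i ((∑ j, δ j y) - δ i y + d y) = g i ((∑ j, δ j y) + δ i x) := by
          have hdy : d y = δ i y + δ i x := by simp [hddef]
          rw [hdy]; congr 1; ring
        have t2 : ∑ z ∈ (A i).erase y, g i ((∑ j, δ j z) - δ i z + d z)
            = ∑ z ∈ (A i).erase y, g i (∑ j, δ j z) := by
          refine Finset.sum_congr rfl fun z hz => ?_
          obtain ⟨hzy, hzA⟩ := Finset.mem_erase.mp hz
          have hzx : z ≠ x := fun h => hxA (h ▸ hzA)
          have hdz : d z = δ i z := by simp [hddef, Function.update_apply, hzy, hzx]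
          rw [hdz]; congr 1; ring
        rw [t1, t2]
      have hold : ∑ z ∈ A i, g i (∑ j, δ j z)
          = g i (∑ j, δ j y) + ∑ z ∈ (A i).erase y, g i (∑ j, δ j z) :=
        (Finset.add_sum_erase (A i) _ hy).symm
      have hstrict : g i (∑ j, δ j y) < g i ((∑ j, δ j y) + δ i x) := by
        have hb1 : δ i x ≤ ∑ j, δ j x := hδle i x
        have hb2 := hpair y x (Ne.symm hxy)
        refine hmono i ⟨hΔ0 y, hΔ1 y⟩ ⟨?_, ?_⟩ (by linarith)
        · have := hΔ0 y; have := (hstrat i).1 x; linarith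
        · linarith
      rw [hnew, hold] at hq
      linarith
    -- Step B: singleton support
    have hex : ∃ x, 0 < δ i x := by
      by_contra h
      push_neg at h
      have h0 : ∑ x, δ i x = 0 :=
        Finset.sum_eq_zero fun x _ => le_antisymm (h x) ((hstrat i).1 x)
      rw [(hstrat i).2] at h0
      linarith
    obtain ⟨x0, hx0⟩ := hex
    have hx0A : x0 ∈ A i := hsub x0 hx0
    have huniq : ∀ x, 0 < δ i x → x = x0 := by
      intro x hx
      by_contra hxx0
      have hxA : x ∈ A i := hsub x hx
      have hp0 : 0 ≤ (∑ j, δ j x) - δ i x := by have := hδle i x; linarith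
      have hq0 : 0 ≤ (∑ j, δ j x0) - δ i x0 := by have := hδle i x0; linarith
      have hp1 : ((∑ j, δ j x) - δ i x) + δ i x + δ i x0 ≤ 1 := by
        have h1 : δ i x0 ≤ ∑ j, δ j x0 := hδle i x0
        have h2 := hpair x x0 hxx0
        linarith
      have hq1 : ((∑ j, δ j x0) - δ i x0) + δ i x + δ i x0 ≤ 1 := by
        have h1 : δ i x ≤ ∑ j, δ j x := hδle i x
        have h2 := hpair x x0 hxx0
        linarith
      have hsplit := aux_split_lt (hconv i) hp0 hq0 hx hx0 hp1 hq1
      set d0 := Function.update (Function.update (δ i) x 0) x0 (δ i x0 + δ i x) with hd0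
      set d1 := Function.update (Function.update (δ i) x0 0) x (δ i x + δ i x0) with hd1
      have hd0s : IsStrategy n m d0 :=
        aux_update2_strategy (hstrat i) hxx0 le_rfl
          (add_nonneg ((hstrat i).1 x0) ((hstrat i).1 x)) (by ring)
      have hd1s : IsStrategy n m d1 :=
        aux_update2_strategy (hstrat i) (Ne.symm hxx0) le_rfl
          (add_nonneg ((hstrat i).1 x) ((hstrat i).1 x0)) (by ring)
      have hcur : ∑ z ∈ A i, g i (∑ j, δ j z)
          = g i (((∑ j, δ j x) - δ i x) + δ i x) + (g i (((∑ j, δ j x0) - δ i x0) + δ i x0)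
            + ∑ z ∈ ((A i).erase x).erase x0, g i (∑ j, δ j z)) := by
        rw [aux_sum_split2 (A i) _ hxA hx0A hxx0]
        have t1 : g i (∑ j, δ j x) = g i (((∑ j, δ j x) - δ i x) + δ i x) := by
          congr 1; ring
        have t2 : g i (∑ j, δ j x0) = g i (((∑ j, δ j x0) - δ i x0) + δ i x0) := by
          congr 1; ring
        rw [t1, t2]
      have htails : ∀ (d : Fin m → ℝ), (∀ z, z ≠ x → z ≠ x0 → d z = δ i z) →
          ∑ z ∈ ((A i).erase x).erase x0, g i ((∑ j, δ j z) - δ i z + d z)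
          = ∑ z ∈ ((A i).erase x).erase x0, g i (∑ j, δ j z) := by
        intro d hdz
        refine Finset.sum_congr rfl fun z hz => ?_
        obtain ⟨hz0, h2⟩ := Finset.mem_erase.mp hz
        obtain ⟨hz1, hz2⟩ := Finset.mem_erase.mp h2
        rw [hdz z hz1 hz0]; congr 1; ring
      have hnew0 : ∑ z ∈ A i, g i ((∑ j, δ j z) - δ i z + d0 z)
          = g i ((∑ j, δ j x) - δ i x) + (g i (((∑ j, δ j x0) - δ i x0) + δ i x + δ i x0)
            + ∑ z ∈ ((A i).erase x).erase x0, g i (∑ j, δ j z)) := by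
        rw [aux_sum_split2 (A i) _ hxA hx0A hxx0]
        have t1 : g i ((∑ j, δ j x) - δ i x + d0 x) = g i ((∑ j, δ j x) - δ i x) := by
          have : d0 x = 0 := by simp [hd0, Function.update_apply, hxx0]
          rw [this, add_zero]
        have t2 : g i ((∑ j, δ j x0) - δ i x0 + d0 x0)
            = g i (((∑ j, δ j x0) - δ i x0) + δ i x + δ i x0) := by
          have : d0 x0 = δ i x0 + δ i x := by simp [hd0]
          rw [this]; congr 1; ring
        rw [t1, t2, htails d0 (fun z h1 h2 => by
          simp [hd0, Function.update_apply, h1, h2])]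
      have hnew1 : ∑ z ∈ A i, g i ((∑ j, δ j z) - δ i z + d1 z)
          = g i (((∑ j, δ j x) - δ i x) + δ i x + δ i x0) + (g i ((∑ j, δ j x0) - δ i x0)
            + ∑ z ∈ ((A i).erase x).erase x0, g i (∑ j, δ j z)) := by
        rw [aux_sum_split2 (A i) _ hxA hx0A hxx0]
        have t1 : g i ((∑ j, δ j x) - δ i x + d1 x)
            = g i (((∑ j, δ j x) - δ i x) + δ i x + δ i x0) := by
          have : d1 x = δ i x + δ i x0 := by simp [hd1]
          rw [this]; congr 1; ring
        have t2 : g i ((∑ j, δ j x0) - δ i x0 + d1 x0) = g i ((∑ j, δ j x0) - δ i x0) := by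
          have : d1 x0 = 0 := by simp [hd1, Function.update_apply, Ne.symm hxx0]
          rw [this, add_zero]
        rw [t1, t2, htails d1 (fun z h1 h2 => by
          simp [hd1, Function.update_apply, h1, h2])]
      rcases lt_max_iff.mp hsplit with hlt | hlt
      · have hq0' := hNr d0 hd0s
        rw [hnew0, hcur] at hq0'
        linarith
      · have hq1' := hNr d1 hd1s
        rw [hnew1, hcur] at hq1'
        linarith
    have hzero : ∀ x, x ≠ x0 → δ i x = 0 := by
      intro x hx
      by_contra hne
      exact hx (huniq x (lt_of_le_of_ne ((hstrat i).1 x) (Ne.symm hne)))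
    have hsuppd : suppF (δ i) = {x0} := by
      ext z
      simp only [suppF, Finset.mem_filter, Finset.mem_univ, true_and, Finset.mem_singleton]
      exact ⟨fun h => huniq z h, fun h => h ▸ hx0⟩
    obtain ⟨hval0, -⟩ := aux_conc (hstrat i) hsuppd
    -- Step C: x0 is the strict maximizer with gap 1/n
    have hgap : ∀ y ∈ A i, y ≠ x0 → (∑ j, δ j y) ≤ (∑ j, δ j x0) - 1/n := by
      intro y hyA hyx0
      by_contra hcon
      push_neg at hcon
      set d : Fin m → ℝ := fun z => if z = y then 1/(n:ℝ) else 0 with hd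
      have hds : IsStrategy n m d := aux_point_strategy hn y
      have hq := hNr d hds
      have hcur : ∑ z ∈ A i, g i (∑ j, δ j z)
          = g i (∑ j, δ j y) + (g i (((∑ j, δ j x0) - 1/n) + 1/n)
            + ∑ z ∈ ((A i).erase y).erase x0, g i (∑ j, δ j z)) := by
        rw [aux_sum_split2 (A i) _ hyA hx0A hyx0]
        have t2 : g i (∑ j, δ j x0) = g i (((∑ j, δ j x0) - 1/n) + 1/n) := by
          congr 1; ring
        rw [t2]
      have hnew : ∑ z ∈ A i, g i ((∑ j, δ j z) - δ i z + d z)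
          = g i ((∑ j, δ j y) + 1/n) + (g i ((∑ j, δ j x0) - 1/n)
            + ∑ z ∈ ((A i).erase y).erase x0, g i (∑ j, δ j z)) := by
        rw [aux_sum_split2 (A i) _ hyA hx0A hyx0]
        have t1 : g i ((∑ j, δ j y) - δ i y + d y) = g i ((∑ j, δ j y) + 1/n) := by
          have h1 : d y = 1/(n:ℝ) := by simp [hd]
          have h2 : δ i y = 0 := hzero y hyx0
          rw [h1, h2]; congr 1; ring
        have t2 : g i ((∑ j, δ j x0) - δ i x0 + d x0) = g i ((∑ j, δ j x0) - 1/n) := by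
          have h1 : d x0 = 0 := by simp [hd, Ne.symm hyx0]
          rw [h1, hval0, add_zero]
        have t3 : ∑ z ∈ ((A i).erase y).erase x0, g i ((∑ j, δ j z) - δ i z + d z)
            = ∑ z ∈ ((A i).erase y).erase x0, g i (∑ j, δ j z) := by
          refine Finset.sum_congr rfl fun z hz => ?_
          obtain ⟨hz0, h2⟩ := Finset.mem_erase.mp hz
          obtain ⟨hz1, hz2⟩ := Finset.mem_erase.mp h2
          have hd0 : d z = 0 := by simp [hd, hz1]
          have hδ0 : δ i z = 0 := hzero z hz0
          rw [hd0, hδ0, sub_zero, add_zero]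
        rw [t1, t2, t3]
      have h1n : (1:ℝ)/n ≤ ∑ j, δ j x0 := by
        have := hδle i x0; rw [hval0] at this; linarith
      have hincr : g i (((∑ j, δ j x0) - 1/n) + 1/n) + g i (∑ j, δ j y)
          < g i ((∑ j, δ j x0) - 1/n) + g i ((∑ j, δ j y) + 1/n) := by
        refine aux_incr_lt (hconv i) (by linarith) (by linarith) hninv ?_
        have h2 := hpair y x0 hyx0
        linarith
      rw [hnew, hcur] at hq
      linarith
    have hMset : Mset (A i) (∑ j, δ j) = {x0} := by
      ext z
      simp only [Mset, Finset.mem_filter, Finset.mem_singleton]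
      constructor
      · rintro ⟨hzA, hzmax⟩
        by_contra hzx0
        have h1 := hzmax x0 hx0A
        rw [hap x0, hap z] at h1
        have h2 := hgap z hzA hzx0
        linarith
      · rintro rfl
        refine ⟨hx0A, fun y hy => ?_⟩
        rw [hap y, hap z]
        rcases eq_or_ne y z with rfl | hyz
        · exact le_rfl
        · have := hgap y hy hyz; linarith
    exact ⟨by rw [hsuppd, hMset], by rw [hMset, Finset.card_singleton]⟩
  · -- characterization → Nash
    rintro ⟨hstrat, hcond⟩
    obtain ⟨hΔ0, hΔsum, hΔ1, hpair, hδle⟩ := aux_facts hn hstrat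
    refine ⟨hstrat, fun i d hd => ?_⟩
    simp only [Pi.add_apply, Pi.sub_apply, Finset.sum_apply]
    -- all agents concentrated
    have hallconc : ∀ j, ∃ c, suppF (δ j) = {c} := by
      intro j
      refine Finset.card_eq_one.mp ?_
      rw [(hcond j).1]
      exact (hcond j).2
    choose c hc using hallconc
    have hconc := fun j => aux_conc (hstrat j) (hc j)
    have hval : ∀ j x, δ j x = if x = c j then 1/(n:ℝ) else 0 := by
      intro j x
      split
      · next h => rw [h]; exact (hconc j).1
      · next h => exact (hconc j).2 x h
    have hcount : ∀ x, ∑ j, δ j x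
        = ((Finset.univ.filter (fun j => x = c j)).card : ℝ) * (1/n) := by
      intro x
      rw [Finset.sum_congr rfl fun j _ => hval j x]
      rw [← Finset.sum_filter, Finset.sum_const, nsmul_eq_mul]
    have hgapgen : ∀ x y, (∑ j, δ j y) < (∑ j, δ j x) →
        (∑ j, δ j y) + 1/n ≤ ∑ j, δ j x := by
      intro x y hlt
      rw [hcount x, hcount y] at *
      have h1 : ((Finset.univ.filter (fun j => y = c j)).card : ℝ)
          < (Finset.univ.filter (fun j => x = c j)).card :=
        (mul_lt_mul_iff_left₀ hninv).mp hlt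
      have h2 : (Finset.univ.filter (fun j => y = c j)).card + 1
          ≤ (Finset.univ.filter (fun j => x = c j)).card :=
        Nat.succ_le_of_lt (by exact_mod_cast h1)
      have h3 : ((Finset.univ.filter (fun j => y = c j)).card : ℝ) + 1
          ≤ ((Finset.univ.filter (fun j => x = c j)).card : ℝ) := by exact_mod_cast h2
      nlinarith
    -- agent i's data
    obtain ⟨hsupp_eq, hcard⟩ := hcond i
    have hMset : Mset (A i) (∑ j, δ j) = {c i} := by rw [← hsupp_eq, hc i]
    have hx0mem : c i ∈ Mset (A i) (∑ j, δ j) := by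
      rw [hMset]; exact Finset.mem_singleton_self _
    obtain ⟨hx0A, hx0max⟩ := Finset.mem_filter.mp hx0mem
    have hx0max' : ∀ y ∈ A i, (∑ j, δ j y) ≤ ∑ j, δ j (c i) := by
      intro y hy
      have := hx0max y hy
      rwa [hap y, hap (c i)] at this
    have hgap : ∀ y ∈ A i, y ≠ c i → (∑ j, δ j y) ≤ (∑ j, δ j (c i)) - 1/n := by
      intro y hy hyne
      have hynot : y ∉ Mset (A i) (∑ j, δ j) := by
        rw [hMset]; simpa using hyne
      have hnall : ¬ (∀ z ∈ A i, (∑ j, δ j) z ≤ (∑ j, δ j) y) := by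
        intro hall
        exact hynot (Finset.mem_filter.mpr ⟨hy, hall⟩)
      push_neg at hnall
      obtain ⟨z, hzA, hzlt⟩ := hnall
      rw [hap z, hap y] at hzlt
      have h1 : (∑ j, δ j y) < ∑ j, δ j (c i) := lt_of_lt_of_le hzlt (hx0max' z hzA)
      have := hgapgen (c i) y h1
      linarith
    -- the bound
    have hB0 : 0 ≤ (∑ j, δ j (c i)) - 1/n := by
      have h1 : δ i (c i) = 1/n := (hconc i).1
      have h2 := hδle i (c i)
      linarith
    have hBh1 : ((∑ j, δ j (c i)) - 1/n) + 1/n ≤ 1 := by linarith [hΔ1 (c i)]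
    have hS0 : 0 ≤ (g i (∑ j, δ j (c i)) - g i ((∑ j, δ j (c i)) - 1/n)) * n := by
      have hlt : g i ((∑ j, δ j (c i)) - 1/n) ≤ g i (∑ j, δ j (c i)) := by
        refine le_of_lt (hmono i ⟨hB0, by linarith⟩ ⟨?_, by linarith [hΔ1 (c i)]⟩
          (by linarith))
        linarith
      nlinarith [le_of_lt hnR]
    have hbB : ∀ x ∈ A i, (∑ j, δ j x) - δ i x ≤ (∑ j, δ j (c i)) - 1/n := by
      intro x hx
      rcases eq_or_ne x (c i) with rfl | hne
      · rw [(hconc i).1]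
      · rw [(hconc i).2 x hne]
        have := hgap x hx hne
        linarith
    have hperterm : ∀ x ∈ A i,
        g i ((∑ j, δ j x) - δ i x + d x) ≤ g i ((∑ j, δ j x) - δ i x)
          + d x * ((g i (∑ j, δ j (c i)) - g i ((∑ j, δ j (c i)) - 1/n)) * n) := by
      intro x hx
      rcases eq_or_lt_of_le (hd.1 x) with h0 | h0
      · rw [← h0]; simp
      · have hdxle : d x ≤ 1/n := by
          have := Finset.single_le_sum (fun z _ => hd.1 z) (Finset.mem_univ x)
          rw [hd.2] at this; exact this
        have hδx := hδle i x
        have hbx0 : 0 ≤ (∑ j, δ j x) - δ i x := by linarith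
        have hslope := aux_slope_le (hconv i).convexOn hbx0 (hbB x hx) h0 hninv
          (by linarith [hbB x hx]) hBh1
        have hBeq : ((∑ j, δ j (c i)) - 1/n) + 1/n = ∑ j, δ j (c i) := by ring
        rw [hBeq] at hslope
        have hSdiv : (g i (∑ j, δ j (c i)) - g i ((∑ j, δ j (c i)) - 1/n)) / (1/n)
            = (g i (∑ j, δ j (c i)) - g i ((∑ j, δ j (c i)) - 1/n)) * n := by
          rw [div_eq_iff (by positivity : (1:ℝ)/(n:ℝ) ≠ 0)]
          field_simp
        rw [hSdiv] at hslope
        have := (div_le_iff₀ h0).mp hslope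
        linarith
    have hdsum : ∑ x ∈ A i, d x ≤ 1/n := by
      have h1 : ∑ x ∈ A i, d x ≤ ∑ x, d x :=
        Finset.sum_le_sum_of_subset_of_nonneg (Finset.subset_univ _) (fun x _ _ => hd.1 x)
      rw [hd.2] at h1; exact h1
    have hfinal : ∑ x ∈ A i, g i (∑ j, δ j x)
        = (∑ x ∈ A i, g i ((∑ j, δ j x) - δ i x))
          + (1/n) * ((g i (∑ j, δ j (c i)) - g i ((∑ j, δ j (c i)) - 1/n)) * n) := by
      have hdiff : ∑ x ∈ A i, (g i (∑ j, δ j x) - g i ((∑ j, δ j x) - δ i x))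
          = g i (∑ j, δ j (c i)) - g i ((∑ j, δ j (c i)) - 1/n) := by
        rw [Finset.sum_eq_single_of_mem (c i) hx0A]
        · rw [(hconc i).1]
        · intro x _ hne
          rw [(hconc i).2 x hne]
          simp
      rw [Finset.sum_sub_distrib] at hdiff
      have hnS : (1/(n:ℝ)) * ((g i (∑ j, δ j (c i)) - g i ((∑ j, δ j (c i)) - 1/n)) * n)
          = g i (∑ j, δ j (c i)) - g i ((∑ j, δ j (c i)) - 1/n) := by
        field_simp
      linarith
    calc ∑ x ∈ A i, g i ((∑ j, δ j x) - δ i x + d x)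
        ≤ ∑ x ∈ A i, (g i ((∑ j, δ j x) - δ i x)
            + d x * ((g i (∑ j, δ j (c i)) - g i ((∑ j, δ j (c i)) - 1/n)) * n)) :=
          Finset.sum_le_sum hperterm
      _ = (∑ x ∈ A i, g i ((∑ j, δ j x) - δ i x))
            + (∑ x ∈ A i, d x) * ((g i (∑ j, δ j (c i)) - g i ((∑ j, δ j (c i)) - 1/n)) * n) := by
          rw [Finset.sum_add_distrib, Finset.sum_mul]
      _ ≤ (∑ x ∈ A i, g i ((∑ j, δ j x) - δ i x))
            + (1/n) * ((g i (∑ j, δ j (c i)) - g i ((∑ j, δ j (c i)) - 1/n)) * n) := by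
          have := mul_le_mul_of_nonneg_right hdsum hS0
          linarith
      _ = ∑ x ∈ A i, g i (∑ j, δ j x) := hfinal.symm
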